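/- If Shuffler uses the greedy strategy on a deck with m copies of each of n card types and Guesser uses the strategy of always guessing a most-abundant card type, then the expected number of correct guesses on cards of multiplicity m equals the n-th harmonic number H_n = Σ_{x=1}^n 1/x; in particular E[C_m] = log n + O(1). -/

import Mathlib

open Finset

abbrev Deck (n : ℕ) := Fin n → ℕ
abbrev Strat (n : ℕ) := Deck n → Fin n → ℝ

/-- Remove one copy of card type `j` from the deck. -/
def Deck.sub {n : ℕ} (d : Deck n) (j : Fin n) : Deck n :=
  fun i => if i = j then d i - 1 else d i

/-- `p` is a probability distribution on `Fin n`. -/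
def IsDist {n : ℕ} (p : Fin n → ℝ) : Prop :=
  (∀ i, 0 ≤ p i) ∧ ∑ i, p i = 1

/-- A Guesser strategy outputs a distribution on card types for each nonzero deck. -/
def IsGuesser {n : ℕ} (G : Strat n) : Prop :=
  ∀ d : Deck n, d ≠ 0 → IsDist (G d)

/-- A Shuffler strategy outputs a distribution supported on the support of the deck. -/
def IsShuffler {n : ℕ} (S : Strat n) : Prop :=
  ∀ d : Deck n, d ≠ 0 → IsDist (S d) ∧ ∀ i, S d i ≠ 0 → d i ≠ 0

/-- Expected score of the game, computed with fuel `N` (the number of cards). -/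
def scoreAux {n : ℕ} (G S : Strat n) : ℕ → Deck n → ℝ
  | 0, _ => 0
  | N + 1, d => ∑ j ∈ Finset.univ.filter (fun j => d j ≠ 0),
      S d j * (G d j + scoreAux G S N (d.sub j))

/-- The expected score `E[C(d,G,S)]`. -/
noncomputable def score {n : ℕ} (G S : Strat n) (d : Deck n) : ℝ :=
  scoreAux G S (∑ i, d i) d

/-- `f(d,S)`: maximum expected score over all Guesser strategies. -/
noncomputable def fval {n : ℕ} (S : Strat n) (d : Deck n) : ℝ :=
  sSup {x | ∃ G, IsGuesser G ∧ score G S d = x}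

/-- `F(d,S)`: minimum expected score over all Guesser strategies. -/
noncomputable def Fval {n : ℕ} (S : Strat n) (d : Deck n) : ℝ :=
  sInf {x | ∃ G, IsGuesser G ∧ score G S d = x}

/-- `f(d) = min_S f(d,S)`. -/
noncomputable def fopt {n : ℕ} (d : Deck n) : ℝ :=
  sInf {x | ∃ S, IsShuffler S ∧ fval S d = x}

/-- `F(d) = max_S F(d,S)`. -/
noncomputable def Fopt {n : ℕ} (d : Deck n) : ℝ :=
  sSup {x | ∃ S, IsShuffler S ∧ Fval S d = x}

/-- The greedy Shuffler strategy: uniform on the support of the deck. -/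
noncomputable def greedy {n : ℕ} : Strat n :=
  fun d i => if d i ≠ 0 then ((Finset.univ.filter fun j => d j ≠ 0).card : ℝ)⁻¹ else 0
/-- The random deck produced by the greedy Shuffler: with fuel `N`, repeatedly draw a
uniformly random card type among those remaining, producing the list of drawn types. -/
noncomputable def deckPMF {n : ℕ} : ℕ → Deck n → PMF (List (Fin n))
  | 0, _ => PMF.pure []
  | N + 1, d =>
      if h : (Finset.univ.filter fun j => d j ≠ 0).Nonempty then
        (PMF.uniformOfFinset _ h).bind fun j => (deckPMF N (d.sub j)).map (List.cons j)
      else PMF.pure []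

/-- Expectation of `f` with respect to the distribution `P` on decks. -/
noncomputable def pexp {n : ℕ} (P : PMF (List (Fin n))) (f : List (Fin n) → ℝ) : ℝ :=
  ∑' l : List (Fin n), (P l).toReal * f l

/-- `simC g k d l`: the number of correct guesses made on cards whose type had
multiplicity exactly `k` at the moment of the guess, when the deterministic Guesser `g`
plays against the drawn sequence `l`, starting from deck `d`. -/
def simC {n : ℕ} (g : Deck n → Fin n) (k : ℕ) : Deck n → List (Fin n) → ℕ
  | _, [] => 0
  | d, j :: l => (if g d = j ∧ d j = k then 1 else 0) + simC g k (d.sub j) l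

/-- `simV k ℓ d l`: the number of card types with at least `ℓ` copies remaining at the
first moment when every card type has fewer than `k` copies remaining, along the drawn
sequence `l` starting from deck `d`. -/
def simV {n : ℕ} (k ℓ : ℕ) : Deck n → List (Fin n) → ℕ
  | d, [] => (Finset.univ.filter fun i => ℓ ≤ d i).card
  | d, j :: l =>
      if ∀ i, d i < k then (Finset.univ.filter fun i => ℓ ≤ d i).card
      else simV k ℓ (d.sub j) l

open scoped ENNReal

noncomputable def pexpE {α : Type*} (P : PMF α) (u : α → ℝ≥0∞) : ℝ≥0∞ := ∑' a, P a * u a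

lemma pexpE_pure {α : Type*} (x : α) (u : α → ℝ≥0∞) : pexpE (PMF.pure x) u = u x := by
  unfold pexpE
  rw [tsum_eq_single x]
  · simp
  · intro b hb; simp [PMF.pure_apply, hb]

lemma pexpE_bind {α β : Type*} (p : PMF α) (q : α → PMF β) (u : β → ℝ≥0∞) :
    pexpE (p.bind q) u = ∑' a, p a * pexpE (q a) u := by
  unfold pexpE
  simp_rw [PMF.bind_apply, ← ENNReal.tsum_mul_right]
  rw [ENNReal.tsum_comm]
  simp_rw [mul_assoc, ENNReal.tsum_mul_left]

lemma pexpE_map {α β : Type*} (p : PMF α) (g : α → β) (u : β → ℝ≥0∞) :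
    pexpE (p.map g) u = pexpE p (fun a => u (g a)) := by
  rw [PMF.map, pexpE_bind]
  exact tsum_congr fun a => by rw [Function.comp_apply, pexpE_pure]

lemma pexpE_uniform_bind {α β : Type*} (s : Finset α) (hs : s.Nonempty) (q : α → PMF β)
    (u : β → ℝ≥0∞) :
    pexpE ((PMF.uniformOfFinset s hs).bind q) u
      = ∑ j ∈ s, (s.card : ℝ≥0∞)⁻¹ * pexpE (q j) u := by
  rw [pexpE_bind, tsum_eq_sum (s := s)]
  · exact Finset.sum_congr rfl fun j hj => by rw [PMF.uniformOfFinset_apply, if_pos hj]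
  · intro b hb; rw [PMF.uniformOfFinset_apply, if_neg hb, zero_mul]

lemma pexpE_add_const {α : Type*} (P : PMF α) (c : ℝ≥0∞) (u : α → ℝ≥0∞) :
    pexpE P (fun a => c + u a) = c + pexpE P u := by
  unfold pexpE
  simp_rw [mul_add, ENNReal.tsum_add, ENNReal.tsum_mul_right, PMF.tsum_coe, one_mul]

section Key
open scoped ENNReal
variable {n : ℕ}

lemma pexpE_deckPMF_succ {N : ℕ} (d : Deck n)
    (h : (Finset.univ.filter fun j => d j ≠ 0).Nonempty) (u : List (Fin n) → ℝ≥0∞) :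
    pexpE (deckPMF (N + 1) d) u
      = ∑ j ∈ Finset.univ.filter (fun j => d j ≠ 0),
          (((Finset.univ.filter fun j => d j ≠ 0).card : ℝ≥0∞))⁻¹ *
            pexpE (deckPMF N (d.sub j)) (fun l => u (j :: l)) := by
  rw [deckPMF, dif_pos h, pexpE_uniform_bind]
  exact Finset.sum_congr rfl fun j hj => by rw [pexpE_map]

lemma sub_sum {d : Deck n} {j : Fin n} (hj : d j ≠ 0) :
    ∑ i, d.sub j i + 1 = ∑ i, d i := by
  rw [← Finset.sum_erase_add Finset.univ d (Finset.mem_univ j),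
      ← Finset.sum_erase_add Finset.univ (d.sub j) (Finset.mem_univ j)]
  have h1 : ∑ i ∈ Finset.univ.erase j, d.sub j i = ∑ i ∈ Finset.univ.erase j, d i :=
    Finset.sum_congr rfl fun i hi => by
      simp only [Deck.sub, if_neg (Finset.mem_erase.mp hi).1]
  rw [h1]
  have h2 : d.sub j j = d j - 1 := by simp [Deck.sub]
  omega

lemma sub_filter {m : ℕ} (hm : 0 < m) {d : Deck n} (hd : ∀ i, d i ≤ m) (j : Fin n) :
    (Finset.univ.filter fun i => d.sub j i = m)
      = (Finset.univ.filter fun i => d i = m).erase j := by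
  ext i
  simp only [Finset.mem_filter, Finset.mem_univ, true_and, Finset.mem_erase]
  simp only [Deck.sub]
  rcases eq_or_ne i j with rfl | hij
  · rw [if_pos rfl]
    have := hd i
    constructor
    · intro h; exfalso; omega
    · rintro ⟨h, -⟩; exact absurd rfl h
  · simp [hij]

lemma key_lemma {m : ℕ} (hm : 0 < m) (g : Deck n → Fin n)
    (hg : ∀ (d : Deck n) (j : Fin n), d j ≤ d (g d)) :
    ∀ (N : ℕ) (d : Deck n), (∀ i, d i ≤ m) → ∑ i, d i = N →
      pexpE (deckPMF N d) (fun l => (simC g m d l : ℝ≥0∞))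
        = ∑ x ∈ Finset.range ((Finset.univ.filter fun i => d i = m).card),
            ((x : ℝ≥0∞) + 1)⁻¹ := by
  intro N
  induction N with
  | zero =>
    intro d hd hsum
    have hz : ∀ i, d i = 0 := by
      intro i
      have := Finset.sum_eq_zero_iff.mp hsum i (Finset.mem_univ i)
      exact this
    have hA : (Finset.univ.filter fun i => d i = m) = ∅ := by
      apply Finset.filter_false_of_mem
      intro i _
      rw [hz i]; omega
    rw [deckPMF, pexpE_pure, hA]
    simp [simC]
  | succ N ih =>
    intro d hd hsum
    have hS : (Finset.univ.filter fun j => d j ≠ 0).Nonempty := by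
      by_contra hc
      rw [Finset.not_nonempty_iff_eq_empty] at hc
      have : ∀ i, d i = 0 := by
        intro i
        by_contra hi
        have : i ∈ Finset.univ.filter fun j => d j ≠ 0 := by simp [hi]
        simp [hc] at this
      simp [Finset.sum_congr rfl (fun i _ => this i)] at hsum
    set S := Finset.univ.filter fun j => d j ≠ 0 with hSdef
    set A := Finset.univ.filter fun i => d i = m with hAdef
    have hAS : A ⊆ S := by
      intro i hi
      rw [hAdef, Finset.mem_filter] at hi
      rw [hSdef, Finset.mem_filter]
      exact ⟨hi.1, by omega⟩
    rw [pexpE_deckPMF_succ d hS]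
    have hstep : ∀ j ∈ S,
        (S.card : ℝ≥0∞)⁻¹ * pexpE (deckPMF N (d.sub j)) (fun l => (simC g m d (j :: l) : ℝ≥0∞))
          = (S.card : ℝ≥0∞)⁻¹ *
            ((if g d = j ∧ d j = m then 1 else 0)
              + ∑ x ∈ Finset.range ((A.erase j).card), ((x : ℝ≥0∞) + 1)⁻¹) := by
      intro j hj
      have hj0 : d j ≠ 0 := by
        rw [hSdef, Finset.mem_filter] at hj; exact hj.2
      have hsub_le : ∀ i, d.sub j i ≤ m := by
        intro i
        have := hd i
        simp only [Deck.sub]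
        split <;> omega
      have hsub_sum : ∑ i, d.sub j i = N := by
        have := sub_sum hj0
        omega
      have hcast : (fun l => (simC g m d (j :: l) : ℝ≥0∞))
          = fun l => (if g d = j ∧ d j = m then (1:ℝ≥0∞) else 0)
              + (simC g m (d.sub j) l : ℝ≥0∞) := by
        funext l
        rw [simC]
        push_cast
        split <;> simp
      rw [hcast, pexpE_add_const, ih (d.sub j) hsub_le hsub_sum, sub_filter hm hd j]
    rw [Finset.sum_congr rfl hstep]
    -- now pure algebra
    by_cases hA : A.Nonempty
    · obtain ⟨i0, hi0⟩ := hA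
      have hi0m : d i0 = m := by
        rw [hAdef, Finset.mem_filter] at hi0; exact hi0.2
      have hgA : g d ∈ A := by
        rw [hAdef, Finset.mem_filter]
        refine ⟨Finset.mem_univ _, ?_⟩
        have h1 := hg d i0
        have h2 := hd (g d)
        omega
      set a := A.card with ha
      have ha1 : 1 ≤ a := Finset.card_pos.mpr ⟨g d, hgA⟩
      have herase : ∀ j ∈ A, (A.erase j).card = a - 1 := by
        intro j hj
        rw [Finset.card_erase_of_mem hj]
      have herase' : ∀ j ∈ S \ A, (A.erase j).card = a := by
        intro j hj
        rw [Finset.erase_eq_of_notMem (Finset.mem_sdiff.mp hj).2]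
      rw [← Finset.sum_sdiff hAS]
      have hsum1 : ∑ j ∈ S \ A,
          (S.card : ℝ≥0∞)⁻¹ * ((if g d = j ∧ d j = m then 1 else 0)
            + ∑ x ∈ Finset.range ((A.erase j).card), ((x : ℝ≥0∞) + 1)⁻¹)
          = (S \ A).card * ((S.card : ℝ≥0∞)⁻¹ *
              ∑ x ∈ Finset.range a, ((x : ℝ≥0∞) + 1)⁻¹) := by
        rw [Finset.sum_congr rfl (fun j hj => ?_), Finset.sum_const, nsmul_eq_mul]
        have hjm : ¬ (g d = j ∧ d j = m) := by
          intro hc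
          exact (Finset.mem_sdiff.mp hj).2 (by rw [hAdef, Finset.mem_filter]; exact ⟨Finset.mem_univ _, hc.2⟩)
        rw [herase' j hj, if_neg hjm, zero_add]
      have hsum2 : ∑ j ∈ A,
          (S.card : ℝ≥0∞)⁻¹ * ((if g d = j ∧ d j = m then 1 else 0)
            + ∑ x ∈ Finset.range ((A.erase j).card), ((x : ℝ≥0∞) + 1)⁻¹)
          = (S.card : ℝ≥0∞)⁻¹ *
              (1 + a * ∑ x ∈ Finset.range (a - 1), ((x : ℝ≥0∞) + 1)⁻¹) := by
        rw [← Finset.mul_sum]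
        congr 1
        rw [Finset.sum_add_distrib]
        congr 1
        · have : ∀ j ∈ A, (if g d = j ∧ d j = m then (1:ℝ≥0∞) else 0)
              = if g d = j then 1 else 0 := by
            intro j hj
            have : d j = m := by rw [hAdef, Finset.mem_filter] at hj; exact hj.2
            simp [this]
          rw [Finset.sum_congr rfl this, Finset.sum_ite_eq A (g d) (fun _ => (1:ℝ≥0∞)),
            if_pos hgA]
        · rw [Finset.sum_congr rfl (fun j hj => by rw [herase j hj]),
            Finset.sum_const, nsmul_eq_mul]
      rw [hsum1, hsum2]
      -- arithmetic: x⁻¹*(1 + a*H(a-1)) + t*(x⁻¹*H a) = H a  where 1 + a*H(a-1) = a*H a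
      have hkey : (1 : ℝ≥0∞) + a * ∑ x ∈ Finset.range (a - 1), ((x : ℝ≥0∞) + 1)⁻¹
          = a * ∑ x ∈ Finset.range a, ((x : ℝ≥0∞) + 1)⁻¹ := by
        obtain ⟨b, hb⟩ : ∃ b, a = b + 1 := ⟨a - 1, by omega⟩
        rw [hb, Finset.sum_range_succ, Nat.add_sub_cancel, mul_add]
        have hb : ((b : ℝ≥0∞) + 1) = ((b + 1 : ℕ) : ℝ≥0∞) := by push_cast; ring
        rw [hb, ENNReal.mul_inv_cancel (by exact_mod_cast Nat.succ_ne_zero b)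
          (ENNReal.natCast_ne_top _)]
        ring
      rw [hkey]
      have hcards : ((S \ A).card : ℝ≥0∞) + a = S.card := by
        have := Finset.card_sdiff_add_card_eq_card hAS
        push_cast [← this]
        ring
      have hS0 : (S.card : ℝ≥0∞) ≠ 0 := by
        exact_mod_cast (Finset.card_pos.mpr hS).ne'
      calc ((S \ A).card : ℝ≥0∞) * ((S.card : ℝ≥0∞)⁻¹ * ∑ x ∈ Finset.range a, ((x : ℝ≥0∞) + 1)⁻¹)
            + (S.card : ℝ≥0∞)⁻¹ * ((a : ℝ≥0∞) * ∑ x ∈ Finset.range a, ((x : ℝ≥0∞) + 1)⁻¹)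
          = (S.card : ℝ≥0∞)⁻¹ * (((S \ A).card + (a : ℝ≥0∞))
              * ∑ x ∈ Finset.range a, ((x : ℝ≥0∞) + 1)⁻¹) := by ring
        _ = (S.card : ℝ≥0∞)⁻¹ * ((S.card : ℝ≥0∞) * ∑ x ∈ Finset.range a, ((x : ℝ≥0∞) + 1)⁻¹) := by
              rw [hcards]
        _ = ∑ x ∈ Finset.range a, ((x : ℝ≥0∞) + 1)⁻¹ := by
              rw [← mul_assoc, ENNReal.inv_mul_cancel hS0 (ENNReal.natCast_ne_top _), one_mul]
    · rw [Finset.not_nonempty_iff_eq_empty] at hA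
      rw [hA]
      simp only [Finset.erase_empty, Finset.card_empty, Finset.range_zero, Finset.sum_empty,
        add_zero]
      have : ∀ j ∈ S, (S.card : ℝ≥0∞)⁻¹ * (if g d = j ∧ d j = m then (1:ℝ≥0∞) else 0) = 0 := by
        intro j hj
        have hjm : ¬ (g d = j ∧ d j = m) := by
          intro hc
          have : j ∈ A := by rw [hAdef, Finset.mem_filter]; exact ⟨Finset.mem_univ _, hc.2⟩
          simp [hA] at this
        rw [if_neg hjm, mul_zero]
      rw [Finset.sum_congr rfl this, Finset.sum_const, smul_zero]

end Key


open scoped ENNReal in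
lemma pexp_eq_toReal {n : ℕ} (P : PMF (List (Fin n))) (u : List (Fin n) → ℕ) :
    pexp P (fun l => (u l : ℝ)) = (pexpE P (fun l => (u l : ℝ≥0∞))).toReal := by
  unfold pexpE
  rw [ENNReal.tsum_toReal_eq
    (fun l => ENNReal.mul_ne_top (PMF.apply_ne_top P l) (ENNReal.natCast_ne_top _))]
  unfold pexp
  exact tsum_congr fun l => by rw [ENNReal.toReal_mul, ENNReal.toReal_natCast]

open scoped ENNReal in
lemma hsum_toReal (n : ℕ) :
    (∑ x ∈ Finset.range n, ((x : ℝ≥0∞) + 1)⁻¹).toReal = ∑ x ∈ Finset.range n, (1 : ℝ) / (x + 1) := by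
  rw [ENNReal.toReal_sum (fun x _ => ENNReal.inv_ne_top.mpr (by simp))]
  refine Finset.sum_congr rfl fun x _ => ?_
  rw [ENNReal.toReal_inv, one_div]
  congr 1

/-- against the greedy Shuffler on the deck of `m` copies of `n` types, a
Guesser always guessing a most-abundant type gets expected number of correct guesses on
multiplicity-`m` cards exactly the harmonic number `H_n`; in particular it is
`log n + O(1)`. -/


theorem stmt14 :
    (∀ (n m : ℕ), 0 < n → 0 < m → ∀ g : Deck n → Fin n, (∀ (d : Deck n) (j : Fin n), d j ≤ d (g d)) →
      pexp (deckPMF (m * n) (fun _ => m)) (fun l => (simC g m (fun _ => m) l : ℝ)) =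
        ∑ x ∈ Finset.range n, (1 : ℝ) / (x + 1)) ∧
    ∃ c : ℝ, ∀ (n m : ℕ), 0 < n → 0 < m → ∀ g : Deck n → Fin n, (∀ (d : Deck n) (j : Fin n), d j ≤ d (g d)) →
      |pexp (deckPMF (m * n) (fun _ => m)) (fun l => (simC g m (fun _ => m) l : ℝ)) -
        Real.log n| ≤ c := by
  have H1 : ∀ (n m : ℕ), 0 < n → 0 < m → ∀ g : Deck n → Fin n,
      (∀ (d : Deck n) (j : Fin n), d j ≤ d (g d)) →
      pexp (deckPMF (m * n) (fun _ => m)) (fun l => (simC g m (fun _ => m) l : ℝ)) =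
        ∑ x ∈ Finset.range n, (1 : ℝ) / (x + 1) := by
    intro n m hn hm g hg
    rw [pexp_eq_toReal]
    rw [key_lemma hm g hg (m * n) (fun _ => m) (fun i => le_refl m) (by
      rw [Finset.sum_const, Finset.card_univ, Fintype.card_fin, smul_eq_mul, mul_comm])]
    have hcard : (Finset.univ.filter fun i : Fin n => (fun _ : Fin n => m) i = m)
        = (Finset.univ : Finset (Fin n)) :=
      Finset.filter_true_of_mem (fun i _ => rfl)
    rw [hcard, Finset.card_univ, Fintype.card_fin, hsum_toReal]
  refine ⟨H1, 1, ?_⟩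
  intro n m hn hm g hg
  rw [H1 n m hn hm g hg]
  have hh : ∑ x ∈ Finset.range n, (1 : ℝ) / (x + 1) = ((harmonic n : ℚ) : ℝ) := by
    rw [harmonic]
    push_cast
    simp [one_div]
  rw [hh, abs_le]
  have h2 := log_add_one_le_harmonic n
  have h3 := harmonic_le_one_add_log n
  have h1 : Real.log n ≤ Real.log (↑(n + 1)) := by
    apply Real.log_le_log (by exact_mod_cast hn)
    push_cast
    linarith
  constructor <;> linarith
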